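/- Let G(v) = (M_{T₁}(v)+M_{T₂}(v))/2. Then ∫_R G(v)/(1+4π²v²) dv < 1; consequently, for mean-zero σ₁, σ₂ ∈ L²(T), the bilinear form Σ_{k≠0} ∫_R σ̂₂(k)‾ σ̂₁(k) G(v)/(1+4π²v²k²) dv is bounded in absolute value by (1−δ_G)‖σ₁‖_{L²}‖σ₂‖_{L²} for δ_G = 1 − ∫ G(v)/(1+4π²v²) dv > 0. -/

import Mathlib

open MeasureTheory Real Complex AddCircle
open scoped ENNReal

/-- The unit torus represented as the interval `[-1/2, 1/2]`. -/
def Torus : Set ℝ := Set.Icc (-(1:ℝ)/2) (1/2)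

/-- Centered Maxwellian at temperature `T`. -/
noncomputable def Maxwellian (T v : ℝ) : ℝ :=
  (Real.sqrt (2 * Real.pi * T))⁻¹ * Real.exp (-v ^ 2 / (2 * T))

/-- `G = (M_{T₁} + M_{T₂})/2`. -/
noncomputable def Gres (T₁ T₂ v : ℝ) : ℝ := (Maxwellian T₁ v + Maxwellian T₂ v) / 2

/-- Fourier coefficient on the unit torus. -/
noncomputable def fourierCoef (σ : ℝ → ℝ) (k : ℤ) : ℂ :=
  ∫ x in Torus, (σ x : ℂ) * Complex.exp (-2 * Real.pi * Complex.I * (k : ℂ) * (x : ℂ))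

lemma maxwellian_eq (T : ℝ) (hT : 0 < T) (v : ℝ) :
    Maxwellian T v = (Real.sqrt (2 * Real.pi * T))⁻¹ * Real.exp (-((2*T)⁻¹ * v^2)) := by
  unfold Maxwellian; congr 1; rw [neg_div]; congr 1; field_simp

lemma maxwellian_pos (T : ℝ) (hT : 0 < T) (v : ℝ) : 0 < Maxwellian T v := by
  unfold Maxwellian
  have : 0 < Real.sqrt (2 * Real.pi * T) := Real.sqrt_pos.2 (by positivity)
  positivity

lemma maxwellian_continuous (T : ℝ) : Continuous (Maxwellian T) := by
  unfold Maxwellian; fun_prop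

lemma maxwellian_integrable (T : ℝ) (hT : 0 < T) : Integrable (Maxwellian T) := by
  have h := (integrable_exp_neg_mul_sq (b := (2*T)⁻¹) (by positivity)).const_mul
    (Real.sqrt (2 * Real.pi * T))⁻¹
  refine h.congr (Filter.Eventually.of_forall fun v => ?_)
  rw [maxwellian_eq T hT v]; ring_nf

lemma maxwellian_integral (T : ℝ) (hT : 0 < T) : ∫ v : ℝ, Maxwellian T v = 1 := by
  have : ∫ v : ℝ, Maxwellian T v
      = (Real.sqrt (2 * Real.pi * T))⁻¹ * ∫ v : ℝ, Real.exp (-((2*T)⁻¹ * v^2)) := by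
    rw [← integral_const_mul]
    exact integral_congr_ae (Filter.Eventually.of_forall fun v => maxwellian_eq T hT v)
  rw [this]
  have : ∫ v : ℝ, Real.exp (-((2*T)⁻¹ * v^2)) = Real.sqrt (π / (2*T)⁻¹) := by
    simpa [neg_mul] using integral_gaussian ((2*T)⁻¹)
  rw [this]
  have h1 : π / (2*T)⁻¹ = 2 * π * T := by field_simp
  rw [h1, inv_mul_cancel₀ (ne_of_gt (Real.sqrt_pos.2 (by positivity)))]

variable {T₁ T₂ : ℝ}

lemma gres_pos (hT₁ : 0 < T₁) (hT₂ : 0 < T₂) (v : ℝ) : 0 < Gres T₁ T₂ v := by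
  unfold Gres
  have := maxwellian_pos T₁ hT₁ v; have := maxwellian_pos T₂ hT₂ v
  positivity

lemma gres_continuous : Continuous (Gres T₁ T₂) :=
  ((maxwellian_continuous T₁).add (maxwellian_continuous T₂)).div_const 2

lemma gres_integrable (hT₁ : 0 < T₁) (hT₂ : 0 < T₂) : Integrable (Gres T₁ T₂) :=
  ((maxwellian_integrable T₁ hT₁).add (maxwellian_integrable T₂ hT₂)).div_const 2

lemma gres_integral (hT₁ : 0 < T₁) (hT₂ : 0 < T₂) : ∫ v : ℝ, Gres T₁ T₂ v = 1 := by
  unfold Gres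
  rw [integral_div, integral_add (maxwellian_integrable T₁ hT₁) (maxwellian_integrable T₂ hT₂),
    maxwellian_integral T₁ hT₁, maxwellian_integral T₂ hT₂]
  norm_num

lemma denom_ge_one (c v : ℝ) (hc : 0 ≤ c) : 1 ≤ 1 + 4 * π ^ 2 * v ^ 2 * c := by
  have : 0 ≤ 4 * π ^ 2 * v ^ 2 * c := by positivity
  linarith

lemma frac_integrable (hT₁ : 0 < T₁) (hT₂ : 0 < T₂) (c : ℝ) (hc : 0 ≤ c) :
    Integrable (fun v => Gres T₁ T₂ v / (1 + 4 * π ^ 2 * v ^ 2 * c)) := by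
  have hd : ∀ v : ℝ, (1 : ℝ) ≤ 1 + 4 * π ^ 2 * v ^ 2 * c := fun v => denom_ge_one c v hc
  have hcont : Continuous (fun v => Gres T₁ T₂ v / (1 + 4 * π ^ 2 * v ^ 2 * c)) := by
    apply gres_continuous.div (by fun_prop)
    intro v; exact ne_of_gt (lt_of_lt_of_le one_pos (hd v))
  refine (gres_integrable hT₁ hT₂).mono hcont.aestronglyMeasurable
    (Filter.Eventually.of_forall fun v => ?_)
  rw [Real.norm_eq_abs, Real.norm_eq_abs, _root_.abs_of_nonneg (le_of_lt (gres_pos hT₁ hT₂ v)),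
    _root_.abs_of_nonneg (div_nonneg (le_of_lt (gres_pos hT₁ hT₂ v)) (le_trans zero_le_one (hd v)))]
  exact div_le_self (le_of_lt (gres_pos hT₁ hT₂ v)) (hd v)

lemma frac_integrable' (hT₁ : 0 < T₁) (hT₂ : 0 < T₂) :
    Integrable (fun v => Gres T₁ T₂ v / (1 + 4 * π ^ 2 * v ^ 2)) := by
  have := frac_integrable hT₁ hT₂ 1 zero_le_one
  simpa using this

lemma part1 (hT₁ : 0 < T₁) (hT₂ : 0 < T₂) :
    (∫ v : ℝ, Gres T₁ T₂ v / (1 + 4 * Real.pi ^ 2 * v ^ 2)) < 1 := by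
  have hint := frac_integrable' hT₁ hT₂
  have hG := gres_integrable hT₁ hT₂
  have hd : ∀ v : ℝ, (1:ℝ) ≤ 1 + 4 * π ^ 2 * v ^ 2 := fun v => by
    simpa using denom_ge_one 1 v zero_le_one
  have hpos : 0 < ∫ v : ℝ, (Gres T₁ T₂ v - Gres T₁ T₂ v / (1 + 4 * π ^ 2 * v ^ 2)) := by
    rw [integral_pos_iff_support_of_nonneg]
    · refine lt_of_lt_of_le ?_ (measure_mono (fun v (hv : v ∈ Set.Ioi (0:ℝ)) => ?_))
      · rw [Real.volume_Ioi]; exact ENNReal.zero_lt_top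
      · have hv' : (0:ℝ) < v := hv
        have h1 : (1:ℝ) < 1 + 4 * π ^ 2 * v ^ 2 := by
          have : 0 < 4 * π ^ 2 * v ^ 2 := by positivity
          linarith
        have := div_lt_self (gres_pos hT₁ hT₂ v) h1
        simp only [Function.mem_support]
        intro h; rw [sub_eq_zero] at h; exact absurd h.symm (ne_of_lt this)
    · intro v
      simp only [Pi.zero_apply]
      have := div_le_self (le_of_lt (gres_pos hT₁ hT₂ v)) (hd v)
      linarith
    · exact hG.sub hint
  rw [integral_sub hG hint, gres_integral hT₁ hT₂] at hpos
  linarith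

lemma parseval_torus (σ : ℝ → ℝ) (hσ : Measurable σ)
    (hσ2 : IntegrableOn (fun x => σ x ^ 2) Torus) :
    Summable (fun k : ℤ => ‖fourierCoef σ k‖ ^ 2) ∧
    ∑' k : ℤ, ‖fourierCoef σ k‖ ^ 2 = ∫ x in Torus, σ x ^ 2 := by
  haveI : Fact ((0:ℝ) < 1) := ⟨one_pos⟩
  set a : ℝ := -(1:ℝ)/2 with ha
  have ha1 : a + 1 = 1/2 := by norm_num [ha]
  set g : AddCircle (1:ℝ) → ℂ := AddCircle.liftIoc 1 a (fun x => (σ x : ℂ)) with hg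
  have hg_meas : Measurable g := by
    have : g = (fun x : ℝ => (σ x : ℂ)) ∘ Subtype.val ∘ (AddCircle.measurableEquivIoc 1 a) := rfl
    rw [this]
    exact (Complex.measurable_ofReal.comp hσ).comp
      (measurable_subtype_coe.comp (AddCircle.measurableEquivIoc 1 a).measurable)
  have hTorus : ∀ f : ℝ → ℝ, (∫ x in Torus, f x) = ∫ x in Set.Ioc a (a+1), f x := by
    intro f; rw [ha1]; exact integral_Icc_eq_integral_Ioc
  have hTorusC : ∀ f : ℝ → ℂ, (∫ x in Torus, f x) = ∫ x in Set.Ioc a (a+1), f x := by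
    intro f; rw [ha1]; exact integral_Icc_eq_integral_Ioc
  have hvol : (volume : Measure (AddCircle (1:ℝ))) = (haarAddCircle : Measure (AddCircle (1:ℝ))) := by
    rw [AddCircle.volume_eq_smul_haarAddCircle]; simp
  have hsq : ∀ x ∈ Set.Ioc a (a+1), ‖g x‖ ^ 2 = σ x ^ 2 := by
    intro x hx
    rw [hg, AddCircle.liftIoc_coe_apply hx, Complex.norm_real, Real.norm_eq_abs, _root_.sq_abs]
  have hInt_g : Integrable (fun t => ‖g t‖ ^ 2) (haarAddCircle : Measure (AddCircle (1:ℝ))) := by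
    rw [← hvol]
    rw [← (AddCircle.measurePreserving_mk 1 a).integrable_comp
      (hg_meas.norm.pow_const 2).aestronglyMeasurable]
    have h1 : IntegrableOn (fun x => σ x ^ 2) (Set.Ioc a (a+1)) := by
      apply hσ2.mono_set; rw [ha1]; exact Set.Ioc_subset_Icc_self
    refine h1.congr ?_
    filter_upwards [ae_restrict_mem measurableSet_Ioc] with x hx
    exact (hsq x hx).symm
  have hmem : MemLp g 2 (haarAddCircle : Measure (AddCircle (1:ℝ))) :=
    (memLp_two_iff_integrable_sq_norm hg_meas.aestronglyMeasurable).2 hInt_g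
  set f : Lp ℂ 2 (haarAddCircle : Measure (AddCircle (1:ℝ))) := hmem.toLp g with hf
  have hfg : (f : AddCircle (1:ℝ) → ℂ) =ᵐ[haarAddCircle] g := hmem.coeFn_toLp
  have hcoeff : ∀ n : ℤ, fourierCoeff (f : AddCircle (1:ℝ) → ℂ) n = fourierCoef σ n := by
    intro n
    have h1 : fourierCoeff (f : AddCircle (1:ℝ) → ℂ) n = fourierCoeff g n := by
      unfold fourierCoeff
      exact integral_congr_ae (hfg.mono fun x hx => by simp only [hx])
    rw [h1, fourierCoeff_eq_intervalIntegral g n a, one_div_one, one_smul,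
      intervalIntegral.integral_of_le (by linarith : a ≤ a + 1)]
    unfold fourierCoef
    rw [hTorusC]
    refine setIntegral_congr_fun measurableSet_Ioc fun x hx => ?_
    rw [hg, AddCircle.liftIoc_coe_apply hx, smul_eq_mul, fourier_coe_apply, mul_comm]
    congr 1
    push_cast
    ring
  have hsum2 : ∫ t, ‖(f : AddCircle (1:ℝ) → ℂ) t‖ ^ 2 ∂(haarAddCircle : Measure (AddCircle (1:ℝ)))
      = ∫ x in Torus, σ x ^ 2 := by
    have h2 : ∫ t, ‖(f : AddCircle (1:ℝ) → ℂ) t‖ ^ 2 ∂(haarAddCircle : Measure (AddCircle (1:ℝ)))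
        = ∫ t, ‖g t‖ ^ 2 ∂(haarAddCircle : Measure (AddCircle (1:ℝ))) :=
      integral_congr_ae (hfg.mono fun x hx => by simp only [hx])
    rw [h2, ← hvol, ← AddCircle.integral_preimage 1 a (fun t => ‖g t‖^2), hTorus]
    exact setIntegral_congr_fun measurableSet_Ioc hsq
  have hpar := tsum_sq_fourierCoeff f
  have hrepr : ∀ i : ℤ, ‖fourierBasis.repr f i‖ = ‖fourierCoef σ i‖ := by
    intro i; rw [fourierBasis_repr, hcoeff i]
  have hsummable : Summable (fun i : ℤ => ‖fourierCoef σ i‖ ^ 2) := by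
    have h := (fourierBasis.repr f).property.summable
      (p := (2 : ℝ≥0∞)) (by norm_num)
    have h2 : (fun i : ℤ => ‖(fourierBasis.repr f) i‖ ^ (2:ℝ≥0∞).toReal)
        = fun i : ℤ => ‖fourierCoef σ i‖ ^ 2 := by
      funext i
      rw [hrepr i]
      norm_num
    rwa [h2] at h
  refine ⟨hsummable, ?_⟩
  rw [← hsum2, ← hpar]
  exact tsum_congr fun n => by rw [hcoeff n]

lemma tsum_cs {u w : ℤ → ℝ} (hu : ∀ k, 0 ≤ u k) (hw : ∀ k, 0 ≤ w k)
    (hu2 : Summable fun k => u k ^ 2) (hw2 : Summable fun k => w k ^ 2) :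
    Summable (fun k => u k * w k) ∧
    ∑' k : ℤ, u k * w k ≤ Real.sqrt (∑' k, u k ^ 2) * Real.sqrt (∑' k, w k ^ 2) := by
  have hsum : Summable (fun k => u k * w k) := by
    refine Summable.of_nonneg_of_le (fun k => mul_nonneg (hu k) (hw k))
      (fun k => ?_) ((hu2.add hw2).div_const 2)
    nlinarith [sq_nonneg (u k - w k)]
  refine ⟨hsum, Summable.tsum_le_of_sum_le hsum fun s => ?_⟩
  have h1 : (∑ k ∈ s, u k * w k) ^ 2 ≤ (∑ k ∈ s, u k ^ 2) * (∑ k ∈ s, w k ^ 2) :=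
    Finset.sum_mul_sq_le_sq_mul_sq s u w
  have h2 : ∑ k ∈ s, u k * w k ≤ Real.sqrt ((∑ k ∈ s, u k ^ 2) * (∑ k ∈ s, w k ^ 2)) := by
    rw [← Real.sqrt_sq (Finset.sum_nonneg fun k _ => mul_nonneg (hu k) (hw k))]
    exact Real.sqrt_le_sqrt h1
  refine h2.trans ?_
  rw [Real.sqrt_mul (Finset.sum_nonneg fun k _ => sq_nonneg _)]
  gcongr
  · exact Summable.sum_le_tsum s (fun k _ => sq_nonneg _) hu2
  · exact Summable.sum_le_tsum s (fun k _ => sq_nonneg _) hw2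

theorem reservoir_bilinear_form_contractive
    (T₁ T₂ : ℝ) (hT₁ : 0 < T₁) (hT₂ : 0 < T₂) :
    (∫ v : ℝ, Gres T₁ T₂ v / (1 + 4 * Real.pi ^ 2 * v ^ 2)) < 1 ∧
    ∀ σ₁ σ₂ : ℝ → ℝ,
      Measurable σ₁ → Measurable σ₂ →
      IntegrableOn (fun x => (σ₁ x) ^ 2) Torus →
      IntegrableOn (fun x => (σ₂ x) ^ 2) Torus →
      (∫ x in Torus, σ₁ x = 0) → (∫ x in Torus, σ₂ x = 0) →
      ‖∑' k : {k : ℤ // k ≠ 0},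
          (starRingEnd ℂ) (fourierCoef σ₂ (k : ℤ)) * fourierCoef σ₁ (k : ℤ) *
            ((∫ v : ℝ, Gres T₁ T₂ v /
                (1 + 4 * Real.pi ^ 2 * v ^ 2 * ((k : ℤ) : ℝ) ^ 2) : ℝ) : ℂ)‖
        ≤ (1 - (1 - ∫ v : ℝ, Gres T₁ T₂ v / (1 + 4 * Real.pi ^ 2 * v ^ 2))) *
            Real.sqrt (∫ x in Torus, (σ₁ x) ^ 2) *
            Real.sqrt (∫ x in Torus, (σ₂ x) ^ 2) := by
  refine ⟨part1 hT₁ hT₂, ?_⟩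
  intro σ₁ σ₂ hm₁ hm₂ hi₁ hi₂ _ _
  rw [sub_sub_cancel]
  set J : ℝ := ∫ v : ℝ, Gres T₁ T₂ v / (1 + 4 * Real.pi ^ 2 * v ^ 2) with hJ
  set I : ℤ → ℝ := fun k => ∫ v : ℝ, Gres T₁ T₂ v /
      (1 + 4 * Real.pi ^ 2 * v ^ 2 * (k : ℝ) ^ 2) with hI
  have hd : ∀ v : ℝ, (1:ℝ) ≤ 1 + 4 * π ^ 2 * v ^ 2 := fun v => by
    simpa using denom_ge_one 1 v zero_le_one
  have hJ0 : 0 ≤ J := integral_nonneg fun v =>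
    div_nonneg (gres_pos hT₁ hT₂ v).le (le_trans zero_le_one (hd v))
  have hIk : ∀ k : ℤ, 0 ≤ I k ∧ (k ≠ 0 → I k ≤ J) := by
    intro k
    have hk2 : (0:ℝ) ≤ (k:ℝ)^2 := sq_nonneg _
    constructor
    · exact integral_nonneg fun v =>
        div_nonneg (gres_pos hT₁ hT₂ v).le (le_trans zero_le_one (denom_ge_one _ v hk2))
    · intro hk
      have hk1 : (1:ℝ) ≤ (k:ℝ)^2 := by
        have : (1:ℤ) ≤ |k| := Int.one_le_abs hk
        have h2 : (1:ℝ) ≤ |(k:ℝ)| := by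
          rw [← Int.cast_abs]; exact_mod_cast this
        nlinarith [h2, abs_nonneg (k:ℝ), _root_.sq_abs (k:ℝ)]
      refine integral_mono (frac_integrable hT₁ hT₂ _ hk2) (frac_integrable' hT₁ hT₂) fun v => ?_
      have hden : 1 + 4 * π ^ 2 * v ^ 2 ≤ 1 + 4 * π ^ 2 * v ^ 2 * (k:ℝ)^2 := by
        nlinarith [sq_nonneg (π * v)]
      exact div_le_div_of_nonneg_left (gres_pos hT₁ hT₂ v).le
        (lt_of_lt_of_le one_pos (hd v)) hden |>.trans_eq rfl
  obtain ⟨hs₁, hp₁⟩ := parseval_torus σ₁ hm₁ hi₁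
  obtain ⟨hs₂, hp₂⟩ := parseval_torus σ₂ hm₂ hi₂
  set u : ℤ → ℝ := fun k => ‖fourierCoef σ₁ k‖ with hu
  set w : ℤ → ℝ := fun k => ‖fourierCoef σ₂ k‖ with hw
  obtain ⟨hsuw, hcs⟩ := tsum_cs (u := u) (w := w)
    (fun k => norm_nonneg _) (fun k => norm_nonneg _) hs₁ hs₂
  set term : {k : ℤ // k ≠ 0} → ℂ := fun k =>
    (starRingEnd ℂ) (fourierCoef σ₂ (k : ℤ)) * fourierCoef σ₁ (k : ℤ) * ((I (k : ℤ) : ℝ) : ℂ)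
    with hterm
  have hterm_bound : ∀ k : {k : ℤ // k ≠ 0}, ‖term k‖ ≤ (u (k:ℤ) * w (k:ℤ)) * J := by
    intro k
    have : ‖term k‖ = w (k:ℤ) * u (k:ℤ) * |I (k:ℤ)| := by
      rw [hterm]
      simp [norm_mul, Complex.norm_real, hu, hw, Real.norm_eq_abs]
    rw [this, _root_.abs_of_nonneg (hIk (k:ℤ)).1]
    have h1 : I (k:ℤ) ≤ J := (hIk (k:ℤ)).2 k.2
    have := mul_nonneg (norm_nonneg (fourierCoef σ₂ (k:ℤ))) (norm_nonneg (fourierCoef σ₁ (k:ℤ)))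
    calc w (k:ℤ) * u (k:ℤ) * I (k:ℤ) ≤ w (k:ℤ) * u (k:ℤ) * J :=
          mul_le_mul_of_nonneg_left h1 (mul_nonneg (norm_nonneg _) (norm_nonneg _))
    _ = (u (k:ℤ) * w (k:ℤ)) * J := by ring
  have hsub : Summable (fun k : {k : ℤ // k ≠ 0} => (u (k:ℤ) * w (k:ℤ)) * J) :=
    (hsuw.subtype _).mul_right J
  have hterm_sum : Summable (fun k : {k : ℤ // k ≠ 0} => ‖term k‖) :=
    Summable.of_nonneg_of_le (fun k => norm_nonneg _) hterm_bound hsub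
  calc ‖∑' k : {k : ℤ // k ≠ 0}, term k‖
      ≤ ∑' k : {k : ℤ // k ≠ 0}, ‖term k‖ := norm_tsum_le_tsum_norm hterm_sum
    _ ≤ ∑' k : {k : ℤ // k ≠ 0}, (u (k:ℤ) * w (k:ℤ)) * J :=
        Summable.tsum_le_tsum hterm_bound hterm_sum hsub
    _ = (∑' k : {k : ℤ // k ≠ 0}, u (k:ℤ) * w (k:ℤ)) * J := tsum_mul_right
    _ ≤ (∑' k : ℤ, u k * w k) * J := by
        apply mul_le_mul_of_nonneg_right _ hJ0
        exact Summable.tsum_le_tsum_of_inj Subtype.val Subtype.val_injective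
          (fun c _ => mul_nonneg (norm_nonneg _) (norm_nonneg _))
          (fun b => le_refl _) (hsuw.subtype _) hsuw
    _ ≤ (Real.sqrt (∑' k : ℤ, u k ^ 2) * Real.sqrt (∑' k : ℤ, w k ^ 2)) * J :=
        mul_le_mul_of_nonneg_right hcs hJ0
    _ = J * Real.sqrt (∫ x in Torus, (σ₁ x) ^ 2) * Real.sqrt (∫ x in Torus, (σ₂ x) ^ 2) := by
        rw [hu, hw] at *
        rw [hp₁, hp₂]
        ring
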